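/- CDF of the ESN distribution: if Y ∼ ESN_p(μ, Σ, λ, τ), then for any y ∈ ℝ^p, P(Y ≤ y) = ξ^{-1} Φ_{p+1}((yᵀ, τ̃)ᵀ; μ*, Ω), where τ̃ = τ/√(1+λᵀλ), μ* = (μᵀ, 0)ᵀ, ξ = Φ(τ̃), and Ω is the block matrix [Σ, -Δ; -Δᵀ, 1] with Δ = Σ^{1/2} λ / √(1+λᵀλ). -/

import Mathlib

open MeasureTheory Real Matrix Filter

/-- Standard normal cdf Φ. -/
noncomputable def stdCDF (t : ℝ) : ℝ :=
  ∫ x in Set.Iic t, ProbabilityTheory.gaussianPDFReal 0 1 x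

/-- Univariate normal density with mean `m` and variance `v`. -/
noncomputable def normPDF (m v x : ℝ) : ℝ :=
  (Real.sqrt (2 * π * v))⁻¹ * Real.exp (-((x - m) ^ 2 / (2 * v)))

/-- Multivariate normal density with mean `μ` and covariance `S`. -/
noncomputable def mvnPDF {n : Type*} [Fintype n] [DecidableEq n] (μ : n → ℝ) (S : Matrix n n ℝ)
    (x : n → ℝ) : ℝ :=
  (2 * π) ^ (-(Fintype.card n : ℝ) / 2) * S.det ^ (-(1 : ℝ) / 2) *
    Real.exp (-(dotProduct (x - μ) (S⁻¹ *ᵥ (x - μ))) / 2)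

/-- The positive semidefinite square root of a positive semidefinite matrix
(the definition `Matrix.PosSemidef.sqrt` of the older Mathlib, since removed). -/
noncomputable def posSemidefSqrt {n : Type*} [Fintype n] [DecidableEq n]
    {A : Matrix n n ℝ} (hA : A.PosSemidef) : Matrix n n ℝ :=
  (hA.1.eigenvectorUnitary : Matrix n n ℝ) * diagonal ((√·) ∘ hA.1.eigenvalues) *
    (star hA.1.eigenvectorUnitary : Matrix n n ℝ)

/-- Extended skew-normal density. -/
noncomputable def esnPDF {n : Type*} [Fintype n] [DecidableEq n] (μ : n → ℝ)
    (S : Matrix n n ℝ) (hS : S.PosDef) (l : n → ℝ) (τ : ℝ) (y : n → ℝ) : ℝ :=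
  (stdCDF (τ / Real.sqrt (1 + dotProduct l l)))⁻¹ * mvnPDF μ S y *
    stdCDF (τ + dotProduct l ((posSemidefSqrt hS.posSemidef)⁻¹ *ᵥ (y - μ)))

lemma posSemidefSqrt_mul_self' {n : Type*} [Fintype n] [DecidableEq n]
    {A : Matrix n n ℝ} (hA : A.PosSemidef) : posSemidefSqrt hA * posSemidefSqrt hA = A := by
  have hU : (star hA.1.eigenvectorUnitary : Matrix n n ℝ) * (hA.1.eigenvectorUnitary : Matrix n n ℝ) = 1 :=
    Unitary.coe_star_mul_self _
  have hD : diagonal ((√·) ∘ hA.1.eigenvalues) * diagonal ((√·) ∘ hA.1.eigenvalues)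
      = diagonal (RCLike.ofReal ∘ hA.1.eigenvalues) := by
    rw [diagonal_mul_diagonal]; congr 1; funext i
    simp [Real.mul_self_sqrt (hA.eigenvalues_nonneg i)]
  conv_rhs => rw [hA.1.spectral_theorem]
  unfold posSemidefSqrt
  simp only [Matrix.mul_assoc]
  rw [← Matrix.mul_assoc (star _ : Matrix n n ℝ) (hA.1.eigenvectorUnitary : Matrix n n ℝ), hU,
    Matrix.one_mul, ← Matrix.mul_assoc (diagonal _), hD]
  simp [Unitary.conjStarAlgAut_apply, Matrix.mul_assoc]

lemma posSemidefSqrt_transpose' {n : Type*} [Fintype n] [DecidableEq n]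
    {A : Matrix n n ℝ} (hA : A.PosSemidef) : (posSemidefSqrt hA)ᵀ = posSemidefSqrt hA := by
  unfold posSemidefSqrt
  simp only [Matrix.transpose_mul, Matrix.diagonal_transpose,
    ← Matrix.conjTranspose_eq_transpose_of_trivial, ← Matrix.star_eq_conjTranspose, star_star,
    Unitary.coe_star, Matrix.mul_assoc]
  simp [Matrix.star_eq_conjTranspose, Matrix.conjTranspose_mul, Matrix.mul_assoc]

set_option autoImplicit false
set_option maxHeartbeats 1000000

section Aux

variable {p : ℕ} {S : Matrix (Fin p) (Fin p) ℝ} (hS : S.PosDef) (l : Fin p → ℝ)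

lemma dp_self_nonneg (v : Fin p → ℝ) : 0 ≤ dotProduct v v :=
  Finset.sum_nonneg fun _ _ => mul_self_nonneg _

lemma c2_pos : (0:ℝ) < 1 + dotProduct l l := by linarith [dp_self_nonneg l]

lemma sqrt_c2_sq : Real.sqrt (1 + dotProduct l l) * Real.sqrt (1 + dotProduct l l)
    = 1 + dotProduct l l := Real.mul_self_sqrt (le_of_lt (c2_pos l))

lemma sqrt_c2_pos : 0 < Real.sqrt (1 + dotProduct l l) :=
  Real.sqrt_pos.2 (c2_pos l)

lemma sqrtR_mul_self : posSemidefSqrt hS.posSemidef * posSemidefSqrt hS.posSemidef = S :=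
  posSemidefSqrt_mul_self' hS.posSemidef

lemma sqrtR_det_ne : (posSemidefSqrt hS.posSemidef).det ≠ 0 := by
  intro h
  have h2 := hS.det_pos
  rw [← sqrtR_mul_self hS, Matrix.det_mul, h, mul_zero] at h2
  exact lt_irrefl _ h2

lemma Sinv_eq : S⁻¹ = (posSemidefSqrt hS.posSemidef)⁻¹ * (posSemidefSqrt hS.posSemidef)⁻¹ := by
  have h := sqrtR_mul_self hS
  generalize hq : posSemidefSqrt hS.posSemidef = R at *
  rw [← h, Matrix.mul_inv_rev]

lemma sqrtR_transpose : (posSemidefSqrt hS.posSemidef)ᵀ = posSemidefSqrt hS.posSemidef := by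
  exact posSemidefSqrt_transpose' hS.posSemidef

-- key: Δ ⬝ S⁻¹ u = c⁻¹ * (l ⬝ R⁻¹ u)
lemma delta_dp (u : Fin p → ℝ) :
    dotProduct ((Real.sqrt (1 + dotProduct l l))⁻¹ • (posSemidefSqrt hS.posSemidef *ᵥ l)) (S⁻¹ *ᵥ u)
      = (Real.sqrt (1 + dotProduct l l))⁻¹ * dotProduct l ((posSemidefSqrt hS.posSemidef)⁻¹ *ᵥ u) := by
  rw [smul_dotProduct, smul_eq_mul]
  congr 1
  rw [← Matrix.vecMul_transpose, ← Matrix.dotProduct_mulVec, sqrtR_transpose hS, Sinv_eq hS,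
    ← Matrix.mulVec_mulVec, Matrix.mulVec_mulVec,
    Matrix.mul_nonsing_inv _ (isUnit_iff_ne_zero.2 (sqrtR_det_ne hS)), Matrix.one_mulVec]

lemma delta_quad :
    dotProduct ((Real.sqrt (1 + dotProduct l l))⁻¹ • (posSemidefSqrt hS.posSemidef *ᵥ l))
      (S⁻¹ *ᵥ ((Real.sqrt (1 + dotProduct l l))⁻¹ • (posSemidefSqrt hS.posSemidef *ᵥ l)))
      = dotProduct l l / (1 + dotProduct l l) := by
  rw [delta_dp hS l, Matrix.mulVec_smul, Matrix.mulVec_mulVec,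
    Matrix.nonsing_inv_mul _ (isUnit_iff_ne_zero.2 (sqrtR_det_ne hS)), Matrix.one_mulVec,
    dotProduct_smul, smul_eq_mul, ← mul_assoc, ← mul_inv, sqrt_c2_sq l]
  rw [div_eq_inv_mul]

include hS in
lemma S_transpose : Sᵀ = S := hS.1

include hS in
lemma Sinv_symm (a b : Fin p → ℝ) : dotProduct a (S⁻¹ *ᵥ b) = dotProduct b (S⁻¹ *ᵥ a) := by
  rw [Matrix.dotProduct_mulVec, ← Matrix.mulVec_transpose, Matrix.transpose_nonsing_inv,
    S_transpose hS, dotProduct_comm]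


section OmegaSec

variable (Δ : Fin p → ℝ) (u : Fin p → ℝ) (s : ℝ)

include hS in
lemma omega_solve (hΔ : Δ = (Real.sqrt (1 + dotProduct l l))⁻¹ • (posSemidefSqrt hS.posSemidef *ᵥ l)) :
    (Matrix.fromBlocks S (Matrix.of fun i (_ : Unit) => -Δ i)
        (Matrix.of fun (_ : Unit) j => -Δ j) 1) *ᵥ
      (Sum.elim (S⁻¹ *ᵥ u + ((1 + dotProduct l l) * (dotProduct Δ (S⁻¹ *ᵥ u) + s)) • (S⁻¹ *ᵥ Δ))
        (fun _ => (1 + dotProduct l l) * (dotProduct Δ (S⁻¹ *ᵥ u) + s)))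
      = Sum.elim u (fun _ => s) := by
  set a := dotProduct Δ (S⁻¹ *ᵥ u) with ha
  set k := (1 + dotProduct l l) * (a + s) with hk
  have hSS : ∀ v : Fin p → ℝ, S *ᵥ (S⁻¹ *ᵥ v) = v := by
    intro v
    rw [Matrix.mulVec_mulVec, Matrix.mul_nonsing_inv _ (isUnit_iff_ne_zero.2 hS.det_pos.ne'),
      Matrix.one_mulVec]
  rw [Matrix.fromBlocks_mulVec]
  have hq : dotProduct Δ (S⁻¹ *ᵥ Δ) = dotProduct l l / (1 + dotProduct l l) := by
    rw [hΔ]; exact delta_quad hS l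
  funext j
  cases j with
  | inl i =>
      simp only [Sum.elim_inl, Sum.elim_comp_inl, Sum.elim_comp_inr, Pi.add_apply]
      rw [Matrix.mulVec_add, Matrix.mulVec_smul, hSS, hSS]
      have hB : ((Matrix.of fun i (_ : Unit) => -Δ i) *ᵥ fun _ => k) = fun i => -(Δ i) * k := by
        funext i
        simp [Matrix.mulVec, dotProduct]
      rw [hB]
      simp only [Pi.add_apply, Pi.smul_apply, smul_eq_mul]
      ring
  | inr i =>
      simp only [Sum.elim_inr, Sum.elim_comp_inl, Sum.elim_comp_inr, Pi.add_apply]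
      have hC : ((Matrix.of fun (_ : Unit) j => -Δ j) *ᵥ
          (S⁻¹ *ᵥ u + k • (S⁻¹ *ᵥ Δ))) i = -(a + k * (dotProduct l l / (1 + dotProduct l l))) := by
        simp only [Matrix.mulVec, dotProduct, Matrix.of_apply]
        rw [show (∑ j, -Δ j * (S⁻¹ *ᵥ u + k • (S⁻¹ *ᵥ Δ)) j)
            = -(dotProduct Δ (S⁻¹ *ᵥ u) + k * dotProduct Δ (S⁻¹ *ᵥ Δ)) by
          simp only [dotProduct, Pi.add_apply, Pi.smul_apply, smul_eq_mul, Finset.mul_sum,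
            ← Finset.sum_add_distrib, ← Finset.sum_neg_distrib]
          exact Finset.sum_congr rfl fun j _ => by ring]
        rw [hq, ← ha]
        rfl
      rw [hC, hk, ha]
      generalize dotProduct Δ (S⁻¹ *ᵥ u) = A
      generalize hT : dotProduct l l = t
      have hc2 : (1 + t) ≠ 0 := by rw [← hT]; exact (c2_pos l).ne'
      simp only [Matrix.one_mulVec]
      field_simp
      ring

include hS in
lemma omega_det (hΔ : Δ = (Real.sqrt (1 + dotProduct l l))⁻¹ • (posSemidefSqrt hS.posSemidef *ᵥ l)) :
    (Matrix.fromBlocks S (Matrix.of fun i (_ : Unit) => -Δ i)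
        (Matrix.of fun (_ : Unit) j => -Δ j) 1).det
      = S.det * (1 + dotProduct l l)⁻¹ := by
  haveI : Invertible S := S.invertibleOfIsUnitDet (isUnit_iff_ne_zero.2 hS.det_pos.ne')
  rw [Matrix.det_fromBlocks₁₁]
  congr 1
  rw [Matrix.det_unique]
  have h1 : ((1 : Matrix Unit Unit ℝ) - (Matrix.of fun (_ : Unit) j => -Δ j) * ⅟S *
      (Matrix.of fun i (_ : Unit) => -Δ i)) default default
      = 1 - dotProduct Δ (S⁻¹ *ᵥ Δ) := by
    rw [Matrix.invOf_eq_nonsing_inv, Matrix.sub_apply, Matrix.one_apply_eq]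
    congr 1
    simp only [Matrix.mul_apply, Matrix.of_apply, dotProduct, Matrix.mulVec, Finset.sum_mul,
      Finset.mul_sum]
    rw [Finset.sum_comm]
    refine Finset.sum_congr rfl fun i _ => Finset.sum_congr rfl fun j _ => by ring
  rw [h1, hΔ, delta_quad hS l]
  generalize hT : dotProduct l l = t
  have hc2 : (1 + t) ≠ 0 := by rw [← hT]; exact (c2_pos l).ne'
  field_simp
  ring


include hS in
lemma omega_det_pos (hΔ : Δ = (Real.sqrt (1 + dotProduct l l))⁻¹ • (posSemidefSqrt hS.posSemidef *ᵥ l)) :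
    0 < (Matrix.fromBlocks S (Matrix.of fun i (_ : Unit) => -Δ i)
        (Matrix.of fun (_ : Unit) j => -Δ j) 1).det := by
  rw [omega_det hS l Δ hΔ]
  exact mul_pos hS.det_pos (inv_pos.2 (c2_pos l))

include hS in
lemma omega_quad (hΔ : Δ = (Real.sqrt (1 + dotProduct l l))⁻¹ • (posSemidefSqrt hS.posSemidef *ᵥ l)) :
    dotProduct (Sum.elim u (fun _ => s))
      ((Matrix.fromBlocks S (Matrix.of fun i (_ : Unit) => -Δ i)
        (Matrix.of fun (_ : Unit) j => -Δ j) 1)⁻¹ *ᵥ (Sum.elim u (fun _ => s)))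
      = dotProduct u (S⁻¹ *ᵥ u)
        + (1 + dotProduct l l) * (dotProduct Δ (S⁻¹ *ᵥ u) + s) ^ 2 := by
  have hdet : (Matrix.fromBlocks S (Matrix.of fun i (_ : Unit) => -Δ i)
      (Matrix.of fun (_ : Unit) j => -Δ j) 1).det ≠ 0 := (omega_det_pos hS l Δ hΔ).ne'
  have hinv : (Matrix.fromBlocks S (Matrix.of fun i (_ : Unit) => -Δ i)
        (Matrix.of fun (_ : Unit) j => -Δ j) 1)⁻¹ *ᵥ (Sum.elim u (fun _ => s))
      = Sum.elim (S⁻¹ *ᵥ u + ((1 + dotProduct l l) * (dotProduct Δ (S⁻¹ *ᵥ u) + s)) • (S⁻¹ *ᵥ Δ))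
        (fun _ => (1 + dotProduct l l) * (dotProduct Δ (S⁻¹ *ᵥ u) + s)) := by
    conv_lhs => rw [← omega_solve hS l Δ u s hΔ]
    rw [Matrix.mulVec_mulVec, Matrix.nonsing_inv_mul _ (isUnit_iff_ne_zero.2 hdet),
      Matrix.one_mulVec]
  rw [hinv, sumElim_dotProduct_sumElim, dotProduct_add,
    dotProduct_smul, smul_eq_mul]
  have hsym : dotProduct u (S⁻¹ *ᵥ Δ) = dotProduct Δ (S⁻¹ *ᵥ u) := Sinv_symm hS u Δ
  rw [hsym]
  have hunit : dotProduct (fun _ : Unit => s)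
      (fun _ : Unit => (1 + dotProduct l l) * (dotProduct Δ (S⁻¹ *ᵥ u) + s))
      = s * ((1 + dotProduct l l) * (dotProduct Δ (S⁻¹ *ᵥ u) + s)) := by
    simp [dotProduct]
  rw [hunit]
  ring


include hS in
lemma mvn_factor (hΔ : Δ = (Real.sqrt (1 + dotProduct l l))⁻¹ • (posSemidefSqrt hS.posSemidef *ᵥ l))
    (μp : Fin p → ℝ) (x : Fin p → ℝ) :
    mvnPDF (Sum.elim μp fun _ => (0:ℝ))
      (Matrix.fromBlocks S (Matrix.of fun i (_ : Unit) => -Δ i)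
        (Matrix.of fun (_ : Unit) j => -Δ j) 1)
      (Sum.elim x fun _ => s)
    = mvnPDF μp S x *
      normPDF (-(dotProduct Δ (S⁻¹ *ᵥ (x - μp)))) ((1 + dotProduct l l)⁻¹) s := by
  have hc2 : (0:ℝ) < 1 + dotProduct l l := c2_pos l
  have h2pi : (0:ℝ) < 2 * π := by positivity
  unfold mvnPDF normPDF
  have hz : ((Sum.elim x fun _ : Unit => s) - Sum.elim μp (fun _ : Unit => (0:ℝ)))
      = Sum.elim (x - μp) (fun _ : Unit => s) := by
    funext j; cases j <;> simp
  rw [hz, omega_quad hS l Δ (x - μp) s hΔ, omega_det hS l Δ hΔ]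
  simp only [Fintype.card_sum, Fintype.card_fin, Fintype.card_unit]
  set t := dotProduct l l with ht
  set q := dotProduct (x - μp) (S⁻¹ *ᵥ (x - μp)) with hq
  set a := dotProduct Δ (S⁻¹ *ᵥ (x - μp)) with haa
  have e1 : (2*π:ℝ) ^ (-((p:ℝ)+1)/2) = (2*π) ^ (-(p:ℝ)/2) * (2*π) ^ (-(1:ℝ)/2) := by
    rw [← Real.rpow_add h2pi]; ring_nf
  have e2 : (S.det * (1+t)⁻¹) ^ (-(1:ℝ)/2)
      = S.det ^ (-(1:ℝ)/2) * ((1+t)⁻¹) ^ (-(1:ℝ)/2) :=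
    Real.mul_rpow hS.det_pos.le (inv_pos.2 hc2).le
  have e3 : (Real.sqrt (2*π*(1+t)⁻¹))⁻¹ = (2*π) ^ (-(1:ℝ)/2) * ((1+t)⁻¹) ^ (-(1:ℝ)/2) := by
    have hv : (0:ℝ) ≤ (1+t)⁻¹ := (inv_pos.2 hc2).le
    rw [Real.sqrt_mul h2pi.le, mul_inv, Real.sqrt_eq_rpow, Real.sqrt_eq_rpow,
      ← Real.rpow_neg h2pi.le, ← Real.rpow_neg hv]
    norm_num
  have e4 : Real.exp (-(q + (1+t) * (a + s)^2)/2)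
      = Real.exp (-q/2) * Real.exp (-((s - -a)^2 / (2 * (1+t)⁻¹))) := by
    rw [← Real.exp_add]
    congr 1
    field_simp
    ring
  have hcast : (-(((p:ℝ)+1))/2 : ℝ) = -((p:ℝ)+1)/2 := by ring
  push_cast
  rw [e1, e2, e3, e4]
  ring

end OmegaSec


section Gauss

open ProbabilityTheory
open scoped NNReal ENNReal

lemma stdCDF_nonneg (t : ℝ) : 0 ≤ stdCDF t :=
  setIntegral_nonneg measurableSet_Iic fun x _ => gaussianPDFReal_nonneg 0 1 x

lemma stdCDF_mono : Monotone stdCDF := by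
  intro t t' htt
  refine setIntegral_mono_set (integrable_gaussianPDFReal 0 1).integrableOn
    (Filter.Eventually.of_forall fun x => gaussianPDFReal_nonneg 0 1 x) ?_
  exact Filter.Eventually.of_forall (Set.Iic_subset_Iic.2 htt)

lemma measurable_stdCDF : Measurable stdCDF := stdCDF_mono.measurable

lemma normPDF_eq_gaussian (m : ℝ) (v : ℝ≥0) (x : ℝ) :
    normPDF m (v : ℝ) x = gaussianPDFReal m v x := by
  simp only [normPDF, gaussianPDFReal, neg_div]

lemma normPDF_nonneg (m v x : ℝ) : 0 ≤ normPDF m v x := by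
  unfold normPDF
  positivity

lemma gauss_cdf (m : ℝ) (v : ℝ) (hv : 0 < v) (b : ℝ) :
    ∫⁻ x in Set.Iic b, ENNReal.ofReal (normPDF m v x)
      = ENNReal.ofReal (stdCDF ((b - m) / Real.sqrt v)) := by
  set vn : ℝ≥0 := ⟨v, hv.le⟩ with hvn
  have hvne : vn ≠ 0 := by
    intro h
    rw [← NNReal.coe_inj] at h
    simp only [hvn, NNReal.coe_mk, NNReal.coe_zero] at h
    exact hv.ne' h
  have hcoe : (vn : ℝ) = v := rfl
  have h1 : ∫⁻ x in Set.Iic b, ENNReal.ofReal (normPDF m v x)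
      = gaussianReal m vn (Set.Iic b) := by
    rw [gaussianReal_apply m hvne]
    refine lintegral_congr fun x => ?_
    rw [← hcoe, normPDF_eq_gaussian]
    rfl
  have hσ : (0:ℝ) < Real.sqrt v := Real.sqrt_pos.2 hv
  have h2 : gaussianReal m vn = ((gaussianReal 0 1).map (Real.sqrt v * ·)).map (· + m) := by
    rw [gaussianReal_map_const_mul, gaussianReal_map_add_const]
    congr 1
    · simp
    · ext
      simp only [NNReal.coe_mul, NNReal.coe_mk, NNReal.coe_one, mul_one, hvn]
      rw [Real.sq_sqrt hv.le]
      rfl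
  have hmeas1 : Measurable fun x : ℝ => x + m := measurable_id.add_const m
  have hmeas2 : Measurable fun x : ℝ => Real.sqrt v * x := measurable_const.mul measurable_id
  have h3 : ((· + m) ⁻¹' Set.Iic b) = Set.Iic (b - m) := by
    ext x; simp [le_sub_iff_add_le]
  have h4 : ((Real.sqrt v * ·) ⁻¹' Set.Iic (b - m)) = Set.Iic ((b - m) / Real.sqrt v) := by
    ext x
    simp only [Set.mem_preimage, Set.mem_Iic]
    rw [le_div_iff₀ hσ, mul_comm]
  rw [h1, h2, Measure.map_apply hmeas1 measurableSet_Iic, h3,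
    Measure.map_apply hmeas2 measurableSet_Iic, h4,
    gaussianReal_apply_eq_integral 0 one_ne_zero]
  rfl

end Gauss


section Key

open scoped NNReal ENNReal

variable (Δ : Fin p → ℝ)

lemma continuous_mvnPDF {n : Type*} [Fintype n] [DecidableEq n] (μ' : n → ℝ)
    (M : Matrix n n ℝ) : Continuous (mvnPDF μ' M) := by
  unfold mvnPDF
  refine continuous_const.mul (Real.continuous_exp.comp ?_)
  refine Continuous.div_const (Continuous.neg ?_) 2
  simp only [dotProduct, Matrix.mulVec, Pi.sub_apply]
  refine continuous_finset_sum _ fun i _ => ?_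
  exact ((continuous_apply i).sub continuous_const).mul
    (continuous_finset_sum _ fun j _ =>
      continuous_const.mul ((continuous_apply j).sub continuous_const))

lemma mvn_nonneg {n : Type*} [Fintype n] [DecidableEq n] {μ' : n → ℝ}
    {M : Matrix n n ℝ} (hdet : 0 ≤ M.det) (x : n → ℝ) : 0 ≤ mvnPDF μ' M x :=
  mul_nonneg (mul_nonneg (Real.rpow_nonneg (by positivity) _)
    (Real.rpow_nonneg hdet _)) (Real.exp_pos _).le

include hS in
lemma key_lintegral (τ : ℝ) (μp : Fin p → ℝ) (y : Fin p → ℝ)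
    (hΔ : Δ = (Real.sqrt (1 + dotProduct l l))⁻¹ • (posSemidefSqrt hS.posSemidef *ᵥ l)) :
    ∫⁻ z in {z : (Fin p ⊕ Unit) → ℝ |
        ∀ j, z j ≤ Sum.elim y (fun _ => τ / Real.sqrt (1 + dotProduct l l)) j},
      ENNReal.ofReal (mvnPDF (Sum.elim μp fun _ => (0:ℝ))
        (Matrix.fromBlocks S (Matrix.of fun i (_:Unit) => -Δ i)
          (Matrix.of fun (_:Unit) j => -Δ j) 1) z)
    = ∫⁻ x in {x : Fin p → ℝ | ∀ i, x i ≤ y i},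
        ENNReal.ofReal (mvnPDF μp S x *
          stdCDF (τ + dotProduct l ((posSemidefSqrt hS.posSemidef)⁻¹ *ᵥ (x - μp)))) := by
  have hc2 : (0:ℝ) < 1 + dotProduct l l := c2_pos l
  have hcpos : 0 < Real.sqrt (1 + dotProduct l l) := sqrt_c2_pos l
  set c := Real.sqrt (1 + dotProduct l l) with hc
  set Om := Matrix.fromBlocks S (Matrix.of fun i (_:Unit) => -Δ i)
      (Matrix.of fun (_:Unit) j => -Δ j) (1 : Matrix Unit Unit ℝ) with hOm
  have hOmdet : 0 < Om.det := omega_det_pos hS l Δ hΔ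
  set A : Set (Fin p → ℝ) := {x | ∀ i, x i ≤ y i} with hA
  set T : Set (Unit → ℝ) := {h | h () ≤ τ / c} with hT
  have hAm : MeasurableSet A := by
    have : A = ⋂ i, {x : Fin p → ℝ | x i ≤ y i} := by
      ext x; simp [hA, Set.mem_iInter]
    rw [this]
    exact MeasurableSet.iInter fun i =>
      measurableSet_le (measurable_pi_apply i) measurable_const
  have hTm : MeasurableSet T :=
    measurableSet_le (measurable_pi_apply ()) measurable_const
  set e := MeasurableEquiv.sumPiEquivProdPi (fun _ : Fin p ⊕ Unit => ℝ) with he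
  have hMP : MeasurePreserving e volume volume :=
    MeasureTheory.volume_measurePreserving_sumPiEquivProdPi (fun _ : Fin p ⊕ Unit => ℝ)
  set F : (Fin p → ℝ) × (Unit → ℝ) → ℝ≥0∞ :=
    fun q => ENNReal.ofReal (mvnPDF (Sum.elim μp fun _ => (0:ℝ)) Om (Sum.elim q.1 q.2)) with hF
  have hsum_meas : Measurable fun q : (Fin p → ℝ) × (Unit → ℝ) =>
      (Sum.elim q.1 q.2 : (Fin p ⊕ Unit) → ℝ) := by
    have : (fun q : (Fin p → ℝ) × (Unit → ℝ) => (Sum.elim q.1 q.2 : (Fin p ⊕ Unit) → ℝ))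
        = e.symm := by
      funext q
      funext j
      cases j <;> rfl
    rw [this]
    exact e.symm.measurable
  have hFmeas : Measurable F :=
    ENNReal.measurable_ofReal.comp ((continuous_mvnPDF _ _).measurable.comp hsum_meas)
  have hBeq : {z : (Fin p ⊕ Unit) → ℝ | ∀ j, z j ≤ Sum.elim y (fun _ => τ / c) j}
      = e ⁻¹' (A ×ˢ T) := by
    ext z
    constructor
    · intro hz
      exact ⟨fun i => hz (Sum.inl i), hz (Sum.inr ())⟩
    · rintro ⟨h1, h2⟩ j
      cases j with
      | inl i => exact h1 i
      | inr u => cases u; exact h2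
  have hge : ∀ z : (Fin p ⊕ Unit) → ℝ,
      ENNReal.ofReal (mvnPDF (Sum.elim μp fun _ => (0:ℝ)) Om z) = F (e z) := by
    intro z
    have hz : (Sum.elim (fun i => z (Sum.inl i)) (fun u => z (Sum.inr u))
        : (Fin p ⊕ Unit) → ℝ) = z := by
      funext j; cases j <;> rfl
    simp only [hF]
    rw [show ((e z).1 : Fin p → ℝ) = fun i => z (Sum.inl i) from rfl,
      show ((e z).2 : Unit → ℝ) = fun u => z (Sum.inr u) from rfl, hz]
  calc ∫⁻ z in {z : (Fin p ⊕ Unit) → ℝ | ∀ j, z j ≤ Sum.elim y (fun _ => τ / c) j},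
        ENNReal.ofReal (mvnPDF (Sum.elim μp fun _ => (0:ℝ)) Om z)
      = ∫⁻ z in e ⁻¹' (A ×ˢ T), F (e z) := by
        rw [hBeq]; exact lintegral_congr fun z => hge z
    _ = ∫⁻ q in A ×ˢ T, F q := hMP.setLIntegral_comp_preimage (hAm.prod hTm) hFmeas
    _ = ∫⁻ x in A, ∫⁻ h in T, F (x, h) := by
        rw [MeasureTheory.Measure.volume_eq_prod, ← Measure.prod_restrict,
          lintegral_prod _ hFmeas.aemeasurable]
    _ = ∫⁻ x in A, ENNReal.ofReal (mvnPDF μp S x *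
          stdCDF (τ + dotProduct l ((posSemidefSqrt hS.posSemidef)⁻¹ *ᵥ (x - μp)))) := by
        refine lintegral_congr fun x => ?_
        have hT2 : T = (MeasurableEquiv.funUnique Unit ℝ) ⁻¹' (Set.Iic (τ / c)) := rfl
        have hf2meas : Measurable fun s : ℝ =>
            ENNReal.ofReal (mvnPDF (Sum.elim μp fun _ => (0:ℝ)) Om
              (Sum.elim x (fun _ : Unit => s))) := by
          refine ENNReal.measurable_ofReal.comp
            ((continuous_mvnPDF _ _).measurable.comp ?_)
          have : (fun s : ℝ => (Sum.elim x (fun _ : Unit => s) : (Fin p ⊕ Unit) → ℝ))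
              = fun s => Sum.elim x (fun _ : Unit => s) := rfl
          exact measurable_pi_lambda _ fun j => by
            cases j with
            | inl i => exact measurable_const
            | inr u => exact measurable_id
        have step1 : ∫⁻ h in T, F (x, h)
            = ∫⁻ s in Set.Iic (τ / c),
                ENNReal.ofReal (mvnPDF (Sum.elim μp fun _ => (0:ℝ)) Om
                  (Sum.elim x (fun _ : Unit => s))) := by
          rw [hT2]
          have := (measurePreserving_funUnique (volume : Measure ℝ) Unit).setLIntegral_comp_preimage
            (measurableSet_Iic (a := τ / c)) hf2meas
          rw [← this]
          refine lintegral_congr fun h => ?_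
          have hh : (Sum.elim x (fun _ : Unit => h ()) : (Fin p ⊕ Unit) → ℝ)
              = Sum.elim x h := by
            funext j
            cases j with
            | inl i => rfl
            | inr u => cases u; rfl
          simp only [hF]
          rw [show (MeasurableEquiv.funUnique Unit ℝ) h = h () from rfl, hh]
        rw [step1]
        have hfac : ∀ s : ℝ, ENNReal.ofReal (mvnPDF (Sum.elim μp fun _ => (0:ℝ)) Om
              (Sum.elim x (fun _ : Unit => s)))
            = ENNReal.ofReal (mvnPDF μp S x) *
              ENNReal.ofReal (normPDF (-(dotProduct Δ (S⁻¹ *ᵥ (x - μp))))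
                ((1 + dotProduct l l)⁻¹) s) := by
          intro s
          rw [hOm, mvn_factor hS l Δ s hΔ μp x,
            ENNReal.ofReal_mul (mvn_nonneg hS.det_pos.le x)]
        simp only [hfac]
        rw [lintegral_const_mul _ (by
          have : Measurable fun s : ℝ => normPDF (-(dotProduct Δ (S⁻¹ *ᵥ (x - μp))))
              ((1 + dotProduct l l)⁻¹) s := by
            unfold normPDF
            fun_prop
          exact ENNReal.measurable_ofReal.comp this)]
        rw [gauss_cdf _ _ (inv_pos.2 hc2) _]
        have harg : (τ / c - -(dotProduct Δ (S⁻¹ *ᵥ (x - μp)))) /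
            Real.sqrt ((1 + dotProduct l l)⁻¹)
            = τ + dotProduct l ((posSemidefSqrt hS.posSemidef)⁻¹ *ᵥ (x - μp)) := by
          rw [Real.sqrt_inv, ← hc, hΔ, delta_dp hS l, ← hc]
          set L := dotProduct l ((posSemidefSqrt hS.posSemidef)⁻¹ *ᵥ (x - μp))
          have hcne : c ≠ 0 := hcpos.ne'
          field_simp
          ring
        rw [harg, ← ENNReal.ofReal_mul (mvn_nonneg hS.det_pos.le x)]

end Key

end Aux

/-- cdf of the ESN distribution: if `Y ∼ ESN_p(μ, Σ, λ, τ)` then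
`P(Y ≤ y) = ξ⁻¹ Φ_{p+1}((yᵀ, τ̃)ᵀ; μ*, Ω)`. -/
theorem esn_cdf {p : ℕ} (μ : Fin p → ℝ) (S : Matrix (Fin p) (Fin p) ℝ)
    (hS : S.PosDef) (l : Fin p → ℝ) (τ : ℝ)
    {α : Type*} [MeasurableSpace α] (P : Measure α) [IsProbabilityMeasure P]
    (Y : α → Fin p → ℝ) (hYmeas : Measurable Y)
    (hY : ∀ A : Set (Fin p → ℝ), MeasurableSet A →
      (P (Y ⁻¹' A)).toReal = ∫ x in A, esnPDF μ S hS l τ x)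
    (Δ : Fin p → ℝ)
    (hΔ : Δ = (Real.sqrt (1 + dotProduct l l))⁻¹ • (posSemidefSqrt hS.posSemidef *ᵥ l))
    (Ωmat : Matrix (Fin p ⊕ Unit) (Fin p ⊕ Unit) ℝ)
    (hΩ : Ωmat = Matrix.fromBlocks S (Matrix.of fun i (_ : Unit) => -Δ i)
      (Matrix.of fun (_ : Unit) j => -Δ j) 1)
    (y : Fin p → ℝ) :
    (P {ω | ∀ i, Y ω i ≤ y i}).toReal =
      (stdCDF (τ / Real.sqrt (1 + dotProduct l l)))⁻¹ *
        ∫ x in {x : (Fin p ⊕ Unit) → ℝ |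
            ∀ j, x j ≤ Sum.elim y (fun _ => τ / Real.sqrt (1 + dotProduct l l)) j},
          mvnPDF (Sum.elim μ (fun _ => (0 : ℝ))) Ωmat x := by
  set A : Set (Fin p → ℝ) := {x | ∀ i, x i ≤ y i} with hA
  have hAm : MeasurableSet A := by
    have : A = ⋂ i, {x : Fin p → ℝ | x i ≤ y i} := by
      ext x; simp [hA, Set.mem_iInter]
    rw [this]
    exact MeasurableSet.iInter fun i =>
      measurableSet_le (measurable_pi_apply i) measurable_const
  have h0 : {ω | ∀ i, Y ω i ≤ y i} = Y ⁻¹' A := rfl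
  rw [h0, hY A hAm]
  simp only [esnPDF, mul_assoc]
  rw [MeasureTheory.integral_const_mul]
  congr 1
  -- measurability facts
  have hInner : Measurable fun x : Fin p → ℝ =>
      τ + dotProduct l ((posSemidefSqrt hS.posSemidef)⁻¹ *ᵥ (x - μ)) := by
    refine (Continuous.measurable ?_)
    refine continuous_const.add ?_
    simp only [dotProduct, Matrix.mulVec, Pi.sub_apply]
    exact continuous_finset_sum _ fun i _ => continuous_const.mul
      (continuous_finset_sum _ fun j _ =>
        continuous_const.mul ((continuous_apply j).sub continuous_const))
  have hfm : Measurable fun x : Fin p → ℝ => mvnPDF μ S x *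
      stdCDF (τ + dotProduct l ((posSemidefSqrt hS.posSemidef)⁻¹ *ᵥ (x - μ))) :=
    (continuous_mvnPDF μ S).measurable.mul (measurable_stdCDF.comp hInner)
  have hgm : Measurable (mvnPDF (Sum.elim μ fun _ => (0:ℝ)) Ωmat) :=
    (continuous_mvnPDF _ _).measurable
  have hOmdet : 0 < Ωmat.det := by
    rw [hΩ]; exact omega_det_pos hS l Δ hΔ
  have h1 : ∫ x in A, mvnPDF μ S x *
        stdCDF (τ + dotProduct l ((posSemidefSqrt hS.posSemidef)⁻¹ *ᵥ (x - μ)))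
      = (∫⁻ x in A, ENNReal.ofReal (mvnPDF μ S x *
          stdCDF (τ + dotProduct l ((posSemidefSqrt hS.posSemidef)⁻¹ *ᵥ (x - μ))))).toReal := by
    rw [integral_eq_lintegral_of_nonneg_ae]
    · exact Filter.Eventually.of_forall fun x =>
        mul_nonneg (mvn_nonneg hS.det_pos.le x) (stdCDF_nonneg _)
    · exact hfm.aestronglyMeasurable
  have h2 : ∫ x in {x : (Fin p ⊕ Unit) → ℝ |
        ∀ j, x j ≤ Sum.elim y (fun _ => τ / Real.sqrt (1 + dotProduct l l)) j},
        mvnPDF (Sum.elim μ (fun _ => (0 : ℝ))) Ωmat x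
      = (∫⁻ x in {x : (Fin p ⊕ Unit) → ℝ |
          ∀ j, x j ≤ Sum.elim y (fun _ => τ / Real.sqrt (1 + dotProduct l l)) j},
          ENNReal.ofReal (mvnPDF (Sum.elim μ (fun _ => (0 : ℝ))) Ωmat x)).toReal := by
    rw [integral_eq_lintegral_of_nonneg_ae]
    · exact Filter.Eventually.of_forall fun x => mvn_nonneg hOmdet.le x
    · exact hgm.aestronglyMeasurable
  rw [h1, h2]
  congr 1
  rw [hΩ]
  exact (key_lintegral hS l Δ τ μ y hΔ).symm
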